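/- arXiv:1101.1138 — 4 statements merged into one kernel-verified Lean document; each statement's English description precedes it below -/
import Mathlib

section
/- Let θ : W → ℝ be a C² solution of Hess θ (V₁, V₁) = 0 on an open set W ⊆ ℝ², where V₁ = (cos θ, sin θ). If α : (−ε, ε) → W is an integral curve of V₁ with ∇_{V₁}θ(α(0)) = 0, then θ is constant along α and α is a straight line segment: α(s) = α(0) + s·V₁(α(0)) for all s. -/
open Set Real

/-- Gronwall: g' = c·g, g 0 = 0, bounded c ⇒ g = 0 on [0,b]. -/
theorem aux_gronwall (g c : ℝ → ℝ) (b K : ℝ) (hg0 : g 0 = 0)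
    (hd : ∀ t ∈ Icc (0:ℝ) b, HasDerivAt g (c t * g t) t)
    (hK : ∀ t ∈ Icc (0:ℝ) b, |c t| ≤ K) : ∀ t ∈ Icc (0:ℝ) b, g t = 0 := by
  have h := norm_le_gronwallBound_of_norm_deriv_right_le (f := g)
    (f' := fun t => c t * g t) (δ := 0) (K := K) (ε := 0) (a := 0) (b := b)
    (fun t ht => (hd t ht).continuousAt.continuousWithinAt)
    (fun t ht => ((hd t (Ico_subset_Icc_self ht)).hasDerivWithinAt))
    (by simp [hg0])
    (fun t ht => by
      have := hK t (Ico_subset_Icc_self ht)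
      calc ‖c t * g t‖ = |c t| * ‖g t‖ := by rw [Real.norm_eq_abs, abs_mul]; rfl
        _ ≤ K * ‖g t‖ := by
            exact mul_le_mul_of_nonneg_right this (norm_nonneg _)
        _ = K * ‖g t‖ + 0 := by ring)
  intro t ht
  have := h t ht
  rw [gronwallBound_ε0] at this
  simpa using this

theorem aux_const {E : Type*} [NormedAddCommGroup E] [NormedSpace ℝ E]
    (φ : ℝ → E) (ε : ℝ) (hε : 0 < ε)
    (h : ∀ t ∈ Ioo (-ε) ε, HasDerivAt φ 0 t) :
    ∀ s ∈ Ioo (-ε) ε, φ s = φ 0 := by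
  intro s hs
  rcases le_or_gt 0 s with h0 | h0
  · have key := constant_of_has_deriv_right_zero (f := φ) (a := 0) (b := s)
      (fun t ht => (h t ⟨by linarith [ht.1], lt_of_le_of_lt ht.2 hs.2⟩).continuousAt.continuousWithinAt)
      (fun t ht => (h t ⟨by linarith [ht.1], lt_of_le_of_lt ht.2.le hs.2⟩).hasDerivWithinAt.mono (fun x hx => hx))
    exact key s ⟨h0, le_refl s⟩
  · set ψ : ℝ → E := fun t => φ (-t) with hψ
    have key := constant_of_has_deriv_right_zero (f := ψ) (a := 0) (b := -s)
      (fun t ht => by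
        have hmem : -t ∈ Ioo (-ε) ε := ⟨by linarith [hs.1, ht.2], by linarith [ht.1, hε]⟩
        exact ((h (-t) hmem).scomp t (hasDerivAt_neg t)).continuousAt.continuousWithinAt)
      (fun t ht => by
        have hmem : -t ∈ Ioo (-ε) ε := ⟨by linarith [hs.1, ht.2], by linarith [ht.1, hε]⟩
        have := (h (-t) hmem).scomp t (hasDerivAt_neg t)
        rw [smul_zero] at this
        exact this.hasDerivWithinAt)
    have := key (-s) ⟨by linarith, le_refl _⟩
    simpa [hψ] using this

/-- If `θ` is a C² solution of `Hess θ(V₁,V₁) = 0` on an open set `W`, with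
`V₁ = (cos θ, sin θ)`, and `α` is an integral curve of `V₁` with
`∇_{V₁}θ(α(0)) = 0`, then `θ` is constant along `α` and `α` is a straight line
segment: `α(s) = α(0) + s • V₁(α(0))`. -/
theorem integral_curve_is_line (W : Set (ℝ × ℝ)) (hW : IsOpen W) (θ : ℝ × ℝ → ℝ)
    (hθ : ∀ p ∈ W, ContDiffAt ℝ 2 θ p)
    (hpde : ∀ p ∈ W,
      fderiv ℝ (fderiv ℝ θ) p (Real.cos (θ p), Real.sin (θ p))
        (Real.cos (θ p), Real.sin (θ p)) = 0)
    (ε : ℝ) (hε : 0 < ε) (α : ℝ → ℝ × ℝ)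
    (hα : ∀ s ∈ Set.Ioo (-ε) ε,
      α s ∈ W ∧ HasDerivAt α (Real.cos (θ (α s)), Real.sin (θ (α s))) s)
    (h0 : fderiv ℝ θ (α 0) (Real.cos (θ (α 0)), Real.sin (θ (α 0))) = 0) :
    ∀ s ∈ Set.Ioo (-ε) ε,
      θ (α s) = θ (α 0)
      ∧ α s = α 0 + s • (Real.cos (θ (α 0)), Real.sin (θ (α 0))) := by
  set f : ℝ → ℝ := fun s => θ (α s) with hf
  set g : ℝ → ℝ := fun s => fderiv ℝ θ (α s) (Real.cos (f s), Real.sin (f s)) with hg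
  set c : ℝ → ℝ := fun s => fderiv ℝ θ (α s) (-Real.sin (f s), Real.cos (f s)) with hc
  -- derivative of f
  have hfderiv : ∀ s ∈ Set.Ioo (-ε) ε, HasDerivAt f (g s) s := by
    intro s hs
    obtain ⟨hp, hd⟩ := hα s hs
    have hθ1 : DifferentiableAt ℝ θ (α s) :=
      (hθ _ hp).differentiableAt (by norm_num)
    exact hθ1.hasFDerivAt.comp_hasDerivAt s hd
  -- derivative of g
  have hgderiv : ∀ s ∈ Set.Ioo (-ε) ε, HasDerivAt g (c s * g s) s := by
    intro s hs
    obtain ⟨hp, hd⟩ := hα s hs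
    have h2 := hθ _ hp
    have hc1 : ContDiffAt ℝ 1 (fderiv ℝ θ) (α s) :=
      h2.fderiv_right (by norm_num)
    have hA : HasFDerivAt (fderiv ℝ θ) (fderiv ℝ (fderiv ℝ θ) (α s)) (α s) :=
      (hc1.differentiableAt (by norm_num)).hasFDerivAt
    have hAs : HasDerivAt (fun t => fderiv ℝ θ (α t))
        (fderiv ℝ (fderiv ℝ θ) (α s) (Real.cos (f s), Real.sin (f s))) s :=
      hA.comp_hasDerivAt s hd
    have hfd := hfderiv s hs
    have hu1 : HasDerivAt (fun t => Real.cos (f t)) (-Real.sin (f s) * g s) s := hfd.cos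
    have hu2 : HasDerivAt (fun t => Real.sin (f t)) (Real.cos (f s) * g s) s := hfd.sin
    have hu : HasDerivAt (fun t => ((Real.cos (f t), Real.sin (f t)) : ℝ × ℝ))
        (-Real.sin (f s) * g s, Real.cos (f s) * g s) s := hu1.prodMk hu2
    have key := hAs.clm_apply hu
    have heq : (fderiv ℝ (fderiv ℝ θ) (α s) (Real.cos (f s), Real.sin (f s)))
          (Real.cos (f s), Real.sin (f s))
        + (fderiv ℝ θ (α s)) (-Real.sin (f s) * g s, Real.cos (f s) * g s)
        = c s * g s := by
      rw [hpde _ hp, zero_add]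
      have : ((-Real.sin (f s) * g s, Real.cos (f s) * g s) : ℝ × ℝ)
          = g s • (-Real.sin (f s), Real.cos (f s)) := by
        simp [Prod.smul_def, mul_comm]
      rw [this, map_smul, smul_eq_mul, mul_comm]
    rw [heq] at key
    exact key
  -- continuity of c
  have hccont : ∀ s ∈ Set.Ioo (-ε) ε, ContinuousAt c s := by
    intro s hs
    obtain ⟨hp, hd⟩ := hα s hs
    have hc1 : ContDiffAt ℝ 1 (fderiv ℝ θ) (α s) := (hθ _ hp).fderiv_right (by norm_num)
    have hαc : ContinuousAt α s := hd.continuousAt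
    have hfc : ContinuousAt f s := (hfderiv s hs).continuousAt
    have hpair : ContinuousAt (fun t => ((fderiv ℝ θ (α t),
        ((-Real.sin (f t), Real.cos (f t)) : ℝ × ℝ)) :
        ((ℝ × ℝ) →L[ℝ] ℝ) × (ℝ × ℝ))) s :=
      (hc1.continuousAt.comp hαc).prodMk
        (((Real.continuous_sin.continuousAt.comp hfc).neg).prodMk
          (Real.continuous_cos.continuousAt.comp hfc))
    exact (isBoundedBilinearMap_apply.continuous.continuousAt).comp hpair
  have hg0 : g 0 = 0 := h0
  -- bound on compacts
  have hKex : ∀ a b : ℝ, Set.Icc a b ⊆ Set.Ioo (-ε) ε →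
      ∃ K, ∀ t ∈ Set.Icc a b, |c t| ≤ K := by
    intro a b hsub
    obtain ⟨K, hK⟩ := isCompact_Icc.exists_bound_of_continuousOn
      (fun t ht => (hccont t (hsub ht)).continuousWithinAt)
    exact ⟨K, fun t ht => by simpa [Real.norm_eq_abs] using hK t ht⟩
  -- g vanishes
  have hgzero : ∀ s ∈ Set.Ioo (-ε) ε, g s = 0 := by
    intro s hs
    rcases le_or_gt 0 s with h0s | h0s
    · have hsub : Set.Icc (0:ℝ) s ⊆ Set.Ioo (-ε) ε :=
        fun t ht => ⟨by linarith [ht.1], lt_of_le_of_lt ht.2 hs.2⟩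
      obtain ⟨K, hK⟩ := hKex 0 s hsub
      exact aux_gronwall g c s K hg0 (fun t ht => hgderiv t (hsub ht)) hK s
        ⟨h0s, le_refl s⟩
    · have hsub : ∀ t ∈ Set.Icc (0:ℝ) (-s), -t ∈ Set.Ioo (-ε) ε :=
        fun t ht => ⟨by linarith [hs.1, ht.2], by linarith [ht.1]⟩
      obtain ⟨K, hK⟩ := hKex s 0 (fun t ht => ⟨lt_of_lt_of_le hs.1 ht.1,
        lt_of_le_of_lt ht.2 hε⟩)
      have key := aux_gronwall (fun t => g (-t)) (fun t => -c (-t)) (-s) K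
        (by simpa using hg0)
        (fun t ht => by
          have := (hgderiv (-t) (hsub t ht)).comp t (hasDerivAt_neg t)
          rw [show -c (-t) * g (-t) = c (-t) * g (-t) * -1 by ring]
          exact this)
        (fun t ht => by
          have : -t ∈ Set.Icc s 0 := ⟨by linarith [ht.2], by linarith [ht.1]⟩
          simpa [abs_neg] using hK (-t) this)
      have := key (-s) ⟨by linarith, le_refl _⟩
      simpa using this
  -- f constant
  have hfconst : ∀ s ∈ Set.Ioo (-ε) ε, f s = f 0 :=
    aux_const f ε hε (fun t ht => hgzero t ht ▸ hfderiv t ht)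
  intro s hs
  refine ⟨hfconst s hs, ?_⟩
  set v : ℝ × ℝ := (Real.cos (θ (α 0)), Real.sin (θ (α 0))) with hv
  have hlin : ∀ t ∈ Set.Ioo (-ε) ε, HasDerivAt (fun r => α r - r • v) 0 t := by
    intro t ht
    have hd := (hα t ht).2
    have hveq : ((Real.cos (θ (α t)), Real.sin (θ (α t))) : ℝ × ℝ) = v := by
      rw [hv]
      have := hfconst t ht
      simp only [hf] at this
      rw [this]
    rw [hveq] at hd
    have hsv : HasDerivAt (fun r : ℝ => r • v) v t := by
      simpa using (hasDerivAt_id t).smul_const v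
    simpa only [sub_self] using hd.fun_sub hsv
  have := aux_const (fun r => α r - r • v) ε hε hlin s hs
  simp only [zero_smul, sub_zero] at this
  have : α s = α 0 + s • v := by
    rw [← this]; abel
  exact this
end

section
/- Let θ : ℝ² × [0,T) → ℝ be C² and X : (−ε,ε) × [0,T) → ℝ² be C² with X_s = V₁(X, t) := (cos θ(X,t), sin θ(X,t)). Define h(s,t) = ⟨X_t, V₂(X,t)⟩ − θ_s where V₂ = (−sin θ, cos θ) and θ_s = ∂_s[θ(X(s,t),t)]. If θ satisfies ∂θ/∂t = Hess_x θ(V₁,V₁) (spatial Hessian), then for each fixed t, ∂h/∂s = (∇_{V₂}θ)(X,t) · h, where ∇_{V₂}θ is the spatial directional derivative of θ along V₂. -/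
open Real

/-- For `h(s,t) = ⟨X_t, V₂(X,t)⟩ − θ_s`, if `θ` satisfies the PDE
`∂θ/∂t = Hess_x θ(V₁,V₁)` and `X_s = V₁(X,t)`, then for each fixed `t`,
`∂h/∂s = (∇_{V₂}θ)(X,t) · h`. -/
theorem h_ode (T ε : ℝ) (θ : ℝ × ℝ → ℝ → ℝ)
    (hθ : ContDiff ℝ 2 (fun q : (ℝ × ℝ) × ℝ => θ q.1 q.2))
    (X : ℝ → ℝ → ℝ × ℝ)
    (hX : ContDiff ℝ 2 (fun q : ℝ × ℝ => X q.1 q.2))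
    (hXs : ∀ s t, deriv (fun σ => X σ t) s
      = (Real.cos (θ (X s t) t), Real.sin (θ (X s t) t)))
    (hpde : ∀ (p : ℝ × ℝ), ∀ t ∈ Set.Ico (0 : ℝ) T,
      deriv (θ p) t
        = fderiv ℝ (fderiv ℝ (fun r => θ r t)) p (Real.cos (θ p t), Real.sin (θ p t))
            (Real.cos (θ p t), Real.sin (θ p t)))
    (h : ℝ → ℝ → ℝ)
    (hh : ∀ s t, h s t =
      (deriv (fun τ => X s τ) t).1 * (-Real.sin (θ (X s t) t))
        + (deriv (fun τ => X s τ) t).2 * Real.cos (θ (X s t) t)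
        - deriv (fun σ => θ (X σ t) t) s)
    (s t : ℝ) (hs : s ∈ Set.Ioo (-ε) ε) (ht : t ∈ Set.Ico (0 : ℝ) T) :
    deriv (fun σ => h σ t) s
      = fderiv ℝ (fun r => θ r t) (X s t)
          (-Real.sin (θ (X s t) t), Real.cos (θ (X s t) t)) * h s t := by
  -- abbreviations as plain terms
  have one_le_two : (1 : WithTop ℕ∞) ≤ 2 := by norm_num
  have hFd : Differentiable ℝ (fun q : ℝ × ℝ => X q.1 q.2) := hX.differentiable (by norm_num)
  have hΘd : Differentiable ℝ (fun q : (ℝ × ℝ) × ℝ => θ q.1 q.2) := hθ.differentiable (by norm_num)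
  have hF1 : ContDiff ℝ 1 (fderiv ℝ (fun q : ℝ × ℝ => X q.1 q.2)) := hX.fderiv_right (le_refl (2 : WithTop ℕ∞))
  -- the t-slice of θ is C²
  have hct : ContDiff ℝ 2 (fun r : ℝ × ℝ => θ r t) := by
    have : ContDiff ℝ 2 (fun r : ℝ × ℝ => ((r, t) : (ℝ × ℝ) × ℝ)) :=
      contDiff_id.prodMk contDiff_const
    exact hθ.comp this
  have hctd : Differentiable ℝ (fun r : ℝ × ℝ => θ r t) := hct.differentiable (by norm_num)
  have hct1 : ContDiff ℝ 1 (fderiv ℝ (fun r : ℝ × ℝ => θ r t)) :=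
    hct.fderiv_right (le_refl (2 : WithTop ℕ∞))
  -- space derivative of X(·,t') at any point
  have hc : ∀ σ t', HasDerivAt (fun σ' => X σ' t') (fderiv ℝ (fun q : ℝ × ℝ => X q.1 q.2) (σ, t') (1, 0)) σ := by
    intro σ t'
    have hpath : HasDerivAt (fun σ' : ℝ => ((σ', t') : ℝ × ℝ)) (1, 0) σ :=
      (hasDerivAt_id σ).prodMk (hasDerivAt_const σ t')
    exact (hFd (σ, t')).hasFDerivAt.comp_hasDerivAt σ hpath
  have hV1 : ∀ σ t', fderiv ℝ (fun q : ℝ × ℝ => X q.1 q.2) (σ, t') (1, 0)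
      = (Real.cos (θ (X σ t') t'), Real.sin (θ (X σ t') t')) := by
    intro σ t'
    rw [← (hc σ t').deriv, hXs]
  have hcV1 : ∀ σ, HasDerivAt (fun σ' => X σ' t)
      (Real.cos (θ (X σ t) t), Real.sin (θ (X σ t) t)) σ := by
    intro σ; have := hc σ t; rwa [hV1] at this
  -- time derivative of X(σ,·)
  have ha : ∀ σ t', HasDerivAt (fun τ => X σ τ) (fderiv ℝ (fun q : ℝ × ℝ => X q.1 q.2) (σ, t') (0, 1)) t' := by
    intro σ t'
    have hpath : HasDerivAt (fun τ : ℝ => ((σ, τ) : ℝ × ℝ)) (0, 1) t' :=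
      (hasDerivAt_const t' σ).prodMk (hasDerivAt_id t')
    exact (hFd (σ, t')).hasFDerivAt.comp_hasDerivAt t' hpath
  have hafun : ∀ σ, deriv (fun τ => X σ τ) t = fderiv ℝ (fun q : ℝ × ℝ => X q.1 q.2) (σ, t) (0, 1) :=
    fun σ => (ha σ t).deriv
  -- derivative of u σ = θ (X σ t) t
  have hu : ∀ σ, HasDerivAt (fun σ' => θ (X σ' t) t)
      (fderiv ℝ (fun r => θ r t) (X σ t)
        (Real.cos (θ (X σ t) t), Real.sin (θ (X σ t) t))) σ := by
    intro σ
    exact (hctd (X σ t)).hasFDerivAt.comp_hasDerivAt σ (hcV1 σ)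
  -- scalar shorthands
  have pyth := Real.sin_sq_add_cos_sq (θ (X s t) t)
  -- derivative of σ ↦ fderiv (θ · t) (X σ t)
  have hΦ : HasDerivAt (fun σ => fderiv ℝ (fun r => θ r t) (X σ t))
      (fderiv ℝ (fderiv ℝ (fun r => θ r t)) (X s t)
        (Real.cos (θ (X s t) t), Real.sin (θ (X s t) t))) s :=
    ((hct1.differentiable (by norm_num)) (X s t)).hasFDerivAt.comp_hasDerivAt s (hcV1 s)
  -- derivative of σ ↦ (cos u, sin u)
  have hv : HasDerivAt (fun σ => ((Real.cos (θ (X σ t) t), Real.sin (θ (X σ t) t)) : ℝ × ℝ))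
      (-Real.sin (θ (X s t) t) * (fderiv ℝ (fun r => θ r t) (X s t)
          (Real.cos (θ (X s t) t), Real.sin (θ (X s t) t))),
        Real.cos (θ (X s t) t) * (fderiv ℝ (fun r => θ r t) (X s t)
          (Real.cos (θ (X s t) t), Real.sin (θ (X s t) t)))) s :=
    ((hu s).cos).prodMk ((hu s).sin)
  -- second s-derivative of u
  have hdd : HasDerivAt (fun σ => deriv (fun σ' => θ (X σ' t) t) σ)
      (fderiv ℝ (fderiv ℝ (fun r => θ r t)) (X s t)
          (Real.cos (θ (X s t) t), Real.sin (θ (X s t) t))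
          (Real.cos (θ (X s t) t), Real.sin (θ (X s t) t))
        + fderiv ℝ (fun r => θ r t) (X s t)
          (-Real.sin (θ (X s t) t) * (fderiv ℝ (fun r => θ r t) (X s t)
              (Real.cos (θ (X s t) t), Real.sin (θ (X s t) t))),
            Real.cos (θ (X s t) t) * (fderiv ℝ (fun r => θ r t) (X s t)
              (Real.cos (θ (X s t) t), Real.sin (θ (X s t) t))))) s := by
    have hfun : (fun σ => deriv (fun σ' => θ (X σ' t) t) σ)
        = fun σ => fderiv ℝ (fun r => θ r t) (X σ t)
            (Real.cos (θ (X σ t) t), Real.sin (θ (X σ t) t)) :=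
      funext fun σ => (hu σ).deriv
    rw [hfun]
    exact hΦ.clm_apply hv
  -- derivative of σ ↦ fderiv F (σ,t) (0,1)
  have hΦ2 : HasDerivAt (fun σ => fderiv ℝ (fun q : ℝ × ℝ => X q.1 q.2) (σ, t))
      (fderiv ℝ (fderiv ℝ (fun q : ℝ × ℝ => X q.1 q.2)) (s, t) (1, 0)) s := by
    have hpath : HasDerivAt (fun σ : ℝ => ((σ, t) : ℝ × ℝ)) (1, 0) s :=
      (hasDerivAt_id s).prodMk (hasDerivAt_const s t)
    exact ((hF1.differentiable (by norm_num)) (s, t)).hasFDerivAt.comp_hasDerivAt s hpath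
  have hg : HasDerivAt (fun σ => fderiv ℝ (fun q : ℝ × ℝ => X q.1 q.2) (σ, t) (0, 1))
      (fderiv ℝ (fderiv ℝ (fun q : ℝ × ℝ => X q.1 q.2)) (s, t) (1, 0) (0, 1)) s := by
    have := hΦ2.clm_apply (hasDerivAt_const s ((0:ℝ), (1:ℝ)))
    simpa using this
  -- symmetry of second derivative of F
  have hsymm : fderiv ℝ (fderiv ℝ (fun q : ℝ × ℝ => X q.1 q.2)) (s, t) (1, 0) (0, 1)
      = fderiv ℝ (fderiv ℝ (fun q : ℝ × ℝ => X q.1 q.2)) (s, t) (0, 1) (1, 0) :=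
    second_derivative_symmetric (fun y => (hFd y).hasFDerivAt)
      ((hF1.differentiable (by norm_num) (s, t)).hasFDerivAt) (1, 0) (0, 1)
  -- time derivative of τ ↦ fderiv F (s,τ)(1,0) = V₁, computed two ways
  have hψ : HasDerivAt (fun τ => θ (X s τ) τ)
      (fderiv ℝ (fun q : (ℝ × ℝ) × ℝ => θ q.1 q.2) (X s t, t) (fderiv ℝ (fun q : ℝ × ℝ => X q.1 q.2) (s, t) (0, 1), 1)) t := by
    have hpath : HasDerivAt (fun τ => ((X s τ, τ) : (ℝ × ℝ) × ℝ))
        (fderiv ℝ (fun q : ℝ × ℝ => X q.1 q.2) (s, t) (0, 1), 1) t := (ha s t).prodMk (hasDerivAt_id t)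
    have h0 := (hΘd (X s t, t)).hasFDerivAt.comp_hasDerivAt
      (f := fun τ => ((X s τ, τ) : (ℝ × ℝ) × ℝ)) t hpath
    exact h0
  have hmix : fderiv ℝ (fderiv ℝ (fun q : ℝ × ℝ => X q.1 q.2)) (s, t) (0, 1) (1, 0)
      = (-Real.sin (θ (X s t) t) * fderiv ℝ (fun q : (ℝ × ℝ) × ℝ => θ q.1 q.2) (X s t, t) (fderiv ℝ (fun q : ℝ × ℝ => X q.1 q.2) (s, t) (0, 1), 1),
         Real.cos (θ (X s t) t) * fderiv ℝ (fun q : (ℝ × ℝ) × ℝ => θ q.1 q.2) (X s t, t) (fderiv ℝ (fun q : ℝ × ℝ => X q.1 q.2) (s, t) (0, 1), 1)) := by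
    have hA : HasDerivAt (fun τ => fderiv ℝ (fun q : ℝ × ℝ => X q.1 q.2) (s, τ) (1, 0))
        (fderiv ℝ (fderiv ℝ (fun q : ℝ × ℝ => X q.1 q.2)) (s, t) (0, 1) (1, 0)) t := by
      have hpath : HasDerivAt (fun τ : ℝ => ((s, τ) : ℝ × ℝ)) (0, 1) t :=
        (hasDerivAt_const t s).prodMk (hasDerivAt_id t)
      have := (((hF1.differentiable (by norm_num)) (s, t)).hasFDerivAt.comp_hasDerivAt t
        hpath).clm_apply (hasDerivAt_const t ((1:ℝ), (0:ℝ)))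
      simpa using this
    have hB : HasDerivAt (fun τ => fderiv ℝ (fun q : ℝ × ℝ => X q.1 q.2) (s, τ) (1, 0))
        (-Real.sin (θ (X s t) t) * fderiv ℝ (fun q : (ℝ × ℝ) × ℝ => θ q.1 q.2) (X s t, t) (fderiv ℝ (fun q : ℝ × ℝ => X q.1 q.2) (s, t) (0, 1), 1),
         Real.cos (θ (X s t) t) * fderiv ℝ (fun q : (ℝ × ℝ) × ℝ => θ q.1 q.2) (X s t, t) (fderiv ℝ (fun q : ℝ × ℝ => X q.1 q.2) (s, t) (0, 1), 1)) t := by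
      have hfun : (fun τ => fderiv ℝ (fun q : ℝ × ℝ => X q.1 q.2) (s, τ) (1, 0))
          = fun τ => ((Real.cos (θ (X s τ) τ), Real.sin (θ (X s τ) τ)) : ℝ × ℝ) :=
        funext fun τ => hV1 s τ
      rw [hfun]
      exact (hψ.cos).prodMk (hψ.sin)
    exact hA.unique hB
  -- decomposition of the space-time derivative of θ
  have hspace : ∀ v : ℝ × ℝ, fderiv ℝ (fun q : (ℝ × ℝ) × ℝ => θ q.1 q.2) (X s t, t) (v, 0)
      = fderiv ℝ (fun r => θ r t) (X s t) v := by
    intro v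
    have hpath : HasFDerivAt (fun r : ℝ × ℝ => ((r, t) : (ℝ × ℝ) × ℝ))
        (ContinuousLinearMap.inl ℝ (ℝ × ℝ) ℝ) (X s t) := hasFDerivAt_prodMk_left _ _
    have hslice : HasFDerivAt (fun r : ℝ × ℝ => θ r t)
        ((fderiv ℝ (fun q : (ℝ × ℝ) × ℝ => θ q.1 q.2) (X s t, t)).comp
          (ContinuousLinearMap.inl ℝ (ℝ × ℝ) ℝ)) (X s t) := by
      have h0 := HasFDerivAt.comp (X s t) (hΘd (X s t, t)).hasFDerivAt hpath
      exact h0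
    rw [hslice.fderiv]
    rfl
  have htime : fderiv ℝ (fun q : (ℝ × ℝ) × ℝ => θ q.1 q.2) (X s t, t) ((0 : ℝ × ℝ), (1 : ℝ)) = deriv (θ (X s t)) t := by
    have hpath : HasDerivAt (fun τ => ((X s t, τ) : (ℝ × ℝ) × ℝ)) ((0 : ℝ × ℝ), (1 : ℝ)) t :=
      (hasDerivAt_const t (X s t)).prodMk (hasDerivAt_id t)
    exact ((hΘd (X s t, t)).hasFDerivAt.comp_hasDerivAt t hpath).deriv.symm
  have hm : fderiv ℝ (fun q : (ℝ × ℝ) × ℝ => θ q.1 q.2) (X s t, t) (fderiv ℝ (fun q : ℝ × ℝ => X q.1 q.2) (s, t) (0, 1), 1)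
      = fderiv ℝ (fun r => θ r t) (X s t) (fderiv ℝ (fun q : ℝ × ℝ => X q.1 q.2) (s, t) (0, 1))
        + deriv (θ (X s t)) t := by
    have hsplit : ((fderiv ℝ (fun q : ℝ × ℝ => X q.1 q.2) (s, t) (0, 1), (1:ℝ)) : (ℝ × ℝ) × ℝ)
        = (fderiv ℝ (fun q : ℝ × ℝ => X q.1 q.2) (s, t) (0, 1), (0:ℝ)) + ((0 : ℝ × ℝ), (1:ℝ)) := by
      simp [Prod.ext_iff]
    rw [hsplit, map_add, hspace, htime]
  -- linearity of the space derivative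
  have hlin : ∀ x y : ℝ, fderiv ℝ (fun r => θ r t) (X s t) (x, y)
      = x * fderiv ℝ (fun r => θ r t) (X s t) (1, 0)
        + y * fderiv ℝ (fun r => θ r t) (X s t) (0, 1) := by
    intro x y
    have : ((x, y) : ℝ × ℝ) = x • ((1:ℝ), (0:ℝ)) + y • ((0:ℝ), (1:ℝ)) := by
      simp [Prod.ext_iff]
    rw [this, map_add, map_smul, map_smul, smul_eq_mul, smul_eq_mul]
  -- assemble the derivative of h(·,t)
  have hfun : (fun σ => h σ t)
      = fun σ => (fderiv ℝ (fun q : ℝ × ℝ => X q.1 q.2) (σ, t) (0, 1)).1 * (-Real.sin (θ (X σ t) t))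
          + (fderiv ℝ (fun q : ℝ × ℝ => X q.1 q.2) (σ, t) (0, 1)).2 * Real.cos (θ (X σ t) t)
          - deriv (fun σ' => θ (X σ' t) t) σ := by
    funext σ
    rw [hh σ t, hafun σ]
  have hg1 : HasDerivAt (fun σ => (fderiv ℝ (fun q : ℝ × ℝ => X q.1 q.2) (σ, t) (0, 1)).1)
      (fderiv ℝ (fderiv ℝ (fun q : ℝ × ℝ => X q.1 q.2)) (s, t) (1, 0) (0, 1)).1 s :=
    (ContinuousLinearMap.fst ℝ ℝ ℝ).hasFDerivAt.comp_hasDerivAt s hg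
  have hg2 : HasDerivAt (fun σ => (fderiv ℝ (fun q : ℝ × ℝ => X q.1 q.2) (σ, t) (0, 1)).2)
      (fderiv ℝ (fderiv ℝ (fun q : ℝ × ℝ => X q.1 q.2)) (s, t) (1, 0) (0, 1)).2 s :=
    (ContinuousLinearMap.snd ℝ ℝ ℝ).hasFDerivAt.comp_hasDerivAt s hg
  have hsin' : HasDerivAt (fun σ => -Real.sin (θ (X σ t) t))
      (-(Real.cos (θ (X s t) t) * (fderiv ℝ (fun r => θ r t) (X s t)
          (Real.cos (θ (X s t) t), Real.sin (θ (X s t) t))))) s := ((hu s).sin).neg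
  have hcos' : HasDerivAt (fun σ => Real.cos (θ (X σ t) t))
      (-Real.sin (θ (X s t) t) * (fderiv ℝ (fun r => θ r t) (X s t)
          (Real.cos (θ (X s t) t), Real.sin (θ (X s t) t)))) s := (hu s).cos
  have big : HasDerivAt (fun σ => (fderiv ℝ (fun q : ℝ × ℝ => X q.1 q.2) (σ, t) (0, 1)).1 * (-Real.sin (θ (X σ t) t))
            + (fderiv ℝ (fun q : ℝ × ℝ => X q.1 q.2) (σ, t) (0, 1)).2 * Real.cos (θ (X σ t) t)
            - deriv (fun σ' => θ (X σ' t) t) σ) _ s :=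
    ((hg1.mul hsin').add (hg2.mul hcos')).sub hdd
  rw [hfun, big.deriv]
  -- now pure algebra
  rw [hh s t, hafun s, (hu s).deriv]
  rw [hsymm, hmix, hm]
  rw [hpde (X s t) t ht]
  -- expand everything in terms of the two partials
  have e1 := hlin (Real.cos (θ (X s t) t)) (Real.sin (θ (X s t) t))
  have e2 := hlin (-Real.sin (θ (X s t) t)) (Real.cos (θ (X s t) t))
  have e3 := hlin (fderiv ℝ (fun q : ℝ × ℝ => X q.1 q.2) (s, t) (0, 1)).1 (fderiv ℝ (fun q : ℝ × ℝ => X q.1 q.2) (s, t) (0, 1)).2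
  have e3' : fderiv ℝ (fun r => θ r t) (X s t) (fderiv ℝ (fun q : ℝ × ℝ => X q.1 q.2) (s, t) (0, 1))
      = (fderiv ℝ (fun q : ℝ × ℝ => X q.1 q.2) (s, t) (0, 1)).1 * fderiv ℝ (fun r => θ r t) (X s t) (1, 0)
        + (fderiv ℝ (fun q : ℝ × ℝ => X q.1 q.2) (s, t) (0, 1)).2 * fderiv ℝ (fun r => θ r t) (X s t) (0, 1) := by
    rw [← e3]
  have e4 := hlin
    (-Real.sin (θ (X s t) t) * (fderiv ℝ (fun r => θ r t) (X s t)
        (Real.cos (θ (X s t) t), Real.sin (θ (X s t) t))))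
    (Real.cos (θ (X s t) t) * (fderiv ℝ (fun r => θ r t) (X s t)
        (Real.cos (θ (X s t) t), Real.sin (θ (X s t) t))))
  rw [e4, e3', e2, e1]
  dsimp only
  linear_combination ((fderiv ℝ (fderiv ℝ fun r => θ r t) (X s t))
      (Real.cos (θ (X s t) t), Real.sin (θ (X s t) t)))
      (Real.cos (θ (X s t) t), Real.sin (θ (X s t) t)) * pyth
end

section
/- Let θ : ℝ² × [0,T) → ℝ be C² satisfying ∂θ/∂t = Hess_x θ(V₁,V₁) with V₁ = (cos θ, sin θ), and let X : (−ε,ε) × [0,T) → ℝ² be C² with X_s = V₁(X,t). If at s = 0 one has ⟨X_t(0,t), V₂(X(0,t),t)⟩ = θ_s(0,t) for all t, then ⟨X_t(s,t), V₂(X(s,t),t)⟩ = θ_s(s,t) for all (s,t), where V₂ = (−sin θ, cos θ) and θ_s = ∂_s[θ(X(s,t),t)]. -/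
lemma linear_ode_zero (h c : ℝ → ℝ) (hc : Continuous c)
    (hd : ∀ s, HasDerivAt h (c s * h s) s) (h0 : h 0 = 0) : ∀ s, h s = 0 := by
  set C : ℝ → ℝ := fun s => ∫ τ in (0:ℝ)..s, c τ with hCdef
  have hC : ∀ s, HasDerivAt C (c s) s := fun s =>
    intervalIntegral.integral_hasDerivAt_right (hc.intervalIntegrable 0 s)
      (hc.stronglyMeasurableAtFilter _ _) hc.continuousAt
  have hg : ∀ s, HasDerivAt (fun s => h s * Real.exp (-C s)) 0 s := by
    intro s
    have := (hd s).fun_mul (((hC s).fun_neg).exp)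
    refine this.congr_deriv ?_
    ring
  have hconst : ∀ s, h s * Real.exp (-C s) = h 0 * Real.exp (-C 0) := by
    intro s
    exact is_const_of_deriv_eq_zero (f := fun s => h s * Real.exp (-C s))
      (fun s => (hg s).differentiableAt) (fun s => (hg s).deriv) s 0
  intro s
  have := hconst s
  rw [h0, zero_mul] at this
  exact (mul_eq_zero.1 this).resolve_right (Real.exp_ne_zero _)

lemma clm_decomp (L : ℝ × ℝ →L[ℝ] ℝ) (a : ℝ × ℝ) (c1 s1 : ℝ) (hcs : s1^2 + c1^2 = 1) :
    L a = (a.1*c1 + a.2*s1) * L (c1, s1) + (-a.1*s1 + a.2*c1) * L (-s1, c1) := by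
  have ha : a = (a.1*c1 + a.2*s1) • ((c1, s1) : ℝ × ℝ)
      + (-a.1*s1 + a.2*c1) • ((-s1, c1) : ℝ × ℝ) := by
    ext
    · simp only [Prod.fst_add, Prod.smul_fst, smul_eq_mul]
      linear_combination (-a.1) * hcs
    · simp only [Prod.snd_add, Prod.smul_snd, smul_eq_mul]
      linear_combination (-a.2) * hcs
  calc L a = L ((a.1*c1 + a.2*s1) • ((c1, s1) : ℝ × ℝ)
      + (-a.1*s1 + a.2*c1) • ((-s1, c1) : ℝ × ℝ)) := by rw [← ha]
    _ = _ := by rw [map_add, map_smul, map_smul, smul_eq_mul, smul_eq_mul]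

/-- If `θ` satisfies `∂θ/∂t = Hess_x θ(V₁,V₁)`, `X_s = V₁(X,t)`, and at `s = 0`
the identity `⟨X_t, V₂⟩ = θ_s` holds for all `t`, then `⟨X_t, V₂⟩ = θ_s` holds
for all `(s,t)` (so the curves move by mean curvature). -/
theorem normal_speed_is_curvature (T ε : ℝ) (θ : ℝ × ℝ → ℝ → ℝ)
    (hθ : ContDiff ℝ 2 (fun q : (ℝ × ℝ) × ℝ => θ q.1 q.2))
    (X : ℝ → ℝ → ℝ × ℝ)
    (hX : ContDiff ℝ 2 (fun q : ℝ × ℝ => X q.1 q.2))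
    (hXs : ∀ s t, deriv (fun σ => X σ t) s
      = (Real.cos (θ (X s t) t), Real.sin (θ (X s t) t)))
    (hpde : ∀ (p : ℝ × ℝ), ∀ t ∈ Set.Ico (0 : ℝ) T,
      deriv (θ p) t
        = fderiv ℝ (fderiv ℝ (fun r => θ r t)) p (Real.cos (θ p t), Real.sin (θ p t))
            (Real.cos (θ p t), Real.sin (θ p t)))
    (h0 : ∀ t ∈ Set.Ico (0 : ℝ) T,
      (deriv (fun τ => X 0 τ) t).1 * (-Real.sin (θ (X 0 t) t))
        + (deriv (fun τ => X 0 τ) t).2 * Real.cos (θ (X 0 t) t)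
        = deriv (fun σ => θ (X σ t) t) 0) :
    ∀ s ∈ Set.Ioo (-ε) ε, ∀ t ∈ Set.Ico (0 : ℝ) T,
      (deriv (fun τ => X s τ) t).1 * (-Real.sin (θ (X s t) t))
        + (deriv (fun τ => X s τ) t).2 * Real.cos (θ (X s t) t)
        = deriv (fun σ => θ (X σ t) t) s := by
  intro s _hs t ht
  have hΘd : Differentiable ℝ (fun q : (ℝ × ℝ) × ℝ => θ q.1 q.2) :=
    hθ.differentiable (by norm_num)
  have hFd : Differentiable ℝ (fun q : ℝ × ℝ => X q.1 q.2) :=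
    hX.differentiable (by norm_num)
  -- space slices of θ are C²
  have hθt : ∀ τ : ℝ, ContDiff ℝ 2 (fun r : ℝ × ℝ => θ r τ) := fun τ =>
    hθ.comp (contDiff_id.prodMk contDiff_const)
  have hθtd : ∀ τ, Differentiable ℝ (fun r : ℝ × ℝ => θ r τ) := fun τ =>
    (hθt τ).differentiable (by norm_num)
  have hθpd : ∀ p : ℝ × ℝ, Differentiable ℝ (θ p) := fun p =>
    hΘd.comp ((differentiable_const p).prodMk differentiable_id)
  -- time partial of X
  have hXt : ∀ σ τ, HasDerivAt (fun τ' => X σ τ')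
      (fderiv ℝ (fun q : ℝ × ℝ => X q.1 q.2) (σ, τ) (0, 1)) τ := by
    intro σ τ
    have h1 : HasDerivAt (fun τ' => ((σ, τ') : ℝ × ℝ)) (0, 1) τ :=
      (hasDerivAt_const τ σ).prodMk (hasDerivAt_id τ)
    exact (hFd (σ, τ)).hasFDerivAt.comp_hasDerivAt τ h1
  -- space partial of X as fderiv
  have hXσ : ∀ σ τ, HasDerivAt (fun σ' => X σ' τ)
      (fderiv ℝ (fun q : ℝ × ℝ => X q.1 q.2) (σ, τ) (1, 0)) σ := by
    intro σ τ
    have h1 : HasDerivAt (fun σ' => ((σ', τ) : ℝ × ℝ)) (1, 0) σ :=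
      (hasDerivAt_id σ).prodMk (hasDerivAt_const σ τ)
    exact (hFd (σ, τ)).hasFDerivAt.comp_hasDerivAt σ h1
  have hfd1 : ∀ σ τ, fderiv ℝ (fun q : ℝ × ℝ => X q.1 q.2) (σ, τ) (1, 0)
      = (Real.cos (θ (X σ τ) τ), Real.sin (θ (X σ τ) τ)) := by
    intro σ τ
    rw [← (hXσ σ τ).deriv]
    exact hXs σ τ
  have hXsd : ∀ σ τ, HasDerivAt (fun σ' => X σ' τ)
      (Real.cos (θ (X σ τ) τ), Real.sin (θ (X σ τ) τ)) σ := by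
    intro σ τ
    have := hXσ σ τ
    rwa [hfd1 σ τ] at this
  -- time derivative of θ p
  have hθtime : ∀ (p : ℝ × ℝ) (τ : ℝ), HasDerivAt (θ p)
      (fderiv ℝ (fun q : (ℝ × ℝ) × ℝ => θ q.1 q.2) (p, τ) ((0 : ℝ × ℝ), (1 : ℝ))) τ := by
    intro p τ
    have h1 : HasDerivAt (fun τ' => ((p, τ') : (ℝ × ℝ) × ℝ)) ((0 : ℝ × ℝ), (1 : ℝ)) τ :=
      (hasDerivAt_const τ p).prodMk (hasDerivAt_id τ)
    exact (hΘd (p, τ)).hasFDerivAt.comp_hasDerivAt τ h1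
  -- splitting the full fderiv of θ into partials
  have hsplit : ∀ (p : ℝ × ℝ) (τ : ℝ) (v : ℝ × ℝ) (w : ℝ),
      fderiv ℝ (fun q : (ℝ × ℝ) × ℝ => θ q.1 q.2) (p, τ) (v, w)
        = fderiv ℝ (fun r => θ r τ) p v + w * deriv (θ p) τ := by
    intro p τ v w
    have h1 : HasFDerivAt (fun r : ℝ × ℝ => ((r, τ) : (ℝ × ℝ) × ℝ))
        ((ContinuousLinearMap.id ℝ (ℝ × ℝ)).prod 0) p :=
      (hasFDerivAt_id p).prodMk (hasFDerivAt_const τ p)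
    have h2 : HasFDerivAt (fun r : ℝ × ℝ => θ r τ)
        ((fderiv ℝ (fun q : (ℝ × ℝ) × ℝ => θ q.1 q.2) (p, τ)).comp
          ((ContinuousLinearMap.id ℝ (ℝ × ℝ)).prod 0)) p :=
      (hΘd (p, τ)).hasFDerivAt.comp (g := fun q : (ℝ × ℝ) × ℝ => θ q.1 q.2) p h1
    have hx : fderiv ℝ (fun r => θ r τ) p v
        = fderiv ℝ (fun q : (ℝ × ℝ) × ℝ => θ q.1 q.2) (p, τ) (v, 0) := by
      rw [h2.fderiv]
      simp
    have hτ : deriv (θ p) τ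
        = fderiv ℝ (fun q : (ℝ × ℝ) × ℝ => θ q.1 q.2) (p, τ) ((0 : ℝ × ℝ), (1 : ℝ)) :=
      (hθtime p τ).deriv
    have hvw : ((v, w) : (ℝ × ℝ) × ℝ) = (v, 0) + w • ((0 : ℝ × ℝ), (1 : ℝ)) := by
      simp [Prod.ext_iff]
    rw [hvw, map_add, map_smul, smul_eq_mul, hx, hτ]
  -- fderiv of X is C¹
  have hF2 : ContDiff ℝ 1 (fderiv ℝ (fun q : ℝ × ℝ => X q.1 q.2)) :=
    hX.fderiv_right (by norm_num)
  -- the h function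
  set h : ℝ → ℝ := fun σ =>
    ((deriv (fun τ' => X σ τ') t).1 * (-Real.sin (θ (X σ t) t))
      + (deriv (fun τ' => X σ τ') t).2 * Real.cos (θ (X σ t) t))
    - deriv (fun σ' => θ (X σ' t) t) σ with hhdef
  -- curvature / space derivative of θ along X
  have hφ : ∀ σ, HasDerivAt (fun σ' => θ (X σ' t) t)
      (fderiv ℝ (fun r => θ r t) (X σ t)
        (Real.cos (θ (X σ t) t), Real.sin (θ (X σ t) t))) σ := by
    intro σ
    exact ((hθtd t) (X σ t)).hasFDerivAt.comp_hasDerivAt σ (hXsd σ t)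
  -- the coefficient function
  set c : ℝ → ℝ := fun σ =>
    fderiv ℝ (fun r => θ r t) (X σ t)
      (-Real.sin (θ (X σ t) t), Real.cos (θ (X σ t) t)) with hcdef
  have hXcont : Continuous (fun σ => X σ t) :=
    hX.continuous.comp (continuous_id.prodMk continuous_const)
  have hθcont : Continuous (fun σ => θ (X σ t) t) :=
    hθ.continuous.comp ((hXcont.prodMk continuous_const))
  have hccont : Continuous c := by
    apply Continuous.clm_apply
    · exact ((hθt t).fderiv_right (m := 1) (by norm_num)).continuous.comp hXcont
    · exact ((Real.continuous_sin.comp hθcont).neg.prodMk (Real.continuous_cos.comp hθcont))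
  -- h 0 = 0
  have hzero : h 0 = 0 := by
    simp only [hhdef]
    rw [sub_eq_zero]
    exact h0 t ht
  -- the key derivative computation
  have key : ∀ σ : ℝ, HasDerivAt h (c σ * h σ) σ := by
    intro σ
    -- notation
    set φ := θ (X σ t) t with hφdef
    set c1 := Real.cos φ with hc1
    set s1 := Real.sin φ with hs1
    set A := deriv (fun τ' => X σ τ') t with hA
    set L := fderiv ℝ (fun r => θ r t) (X σ t) with hL
    set Tt := deriv (θ (X σ t)) t with hTt
    set k := L (c1, s1) with hk
    set m := L A + Tt with hm
    -- derivative of ψ τ = θ (X σ τ) τ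
    have hψ : HasDerivAt (fun τ => θ (X σ τ) τ) m t := by
      have hAfd : A = fderiv ℝ (fun q : ℝ × ℝ => X q.1 q.2) (σ, t) (0, 1) :=
        hA.trans ((hXt σ t).deriv)
      have h1 : HasDerivAt (fun τ => ((X σ τ, τ) : (ℝ × ℝ) × ℝ))
          ((fderiv ℝ (fun q : ℝ × ℝ => X q.1 q.2) (σ, t) (0, 1), 1)) t :=
        (hXt σ t).prodMk (hasDerivAt_id t)
      rw [← hAfd] at h1
      have h2 : HasDerivAt (fun τ => θ (X σ τ) τ)
          (fderiv ℝ (fun q : (ℝ × ℝ) × ℝ => θ q.1 q.2) (X σ t, t) (A, 1)) t :=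
        HasFDerivAt.comp_hasDerivAt (f := fun τ => ((X σ τ, τ) : (ℝ × ℝ) × ℝ)) t
          (hΘd (X σ t, t)).hasFDerivAt h1
      have h3 : fderiv ℝ (fun q : (ℝ × ℝ) × ℝ => θ q.1 q.2) (X σ t, t) (A, 1) = m := by
        rw [hsplit (X σ t) t A 1, one_mul]
      rwa [h3] at h2
    -- mixed partial: derivative in σ of the time partial A
    have hAder : HasDerivAt (fun σ' => deriv (fun τ' => X σ' τ') t)
        (-s1 * m, c1 * m) σ := by
      have h1 : HasDerivAt (fun σ' => ((σ', t) : ℝ × ℝ)) (1, 0) σ :=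
        (hasDerivAt_id σ).prodMk (hasDerivAt_const σ t)
      have h2 : HasDerivAt (fun σ' => fderiv ℝ (fun q : ℝ × ℝ => X q.1 q.2) (σ', t))
          (fderiv ℝ (fderiv ℝ (fun q : ℝ × ℝ => X q.1 q.2)) (σ, t) (1, 0)) σ :=
        (hF2.differentiable one_ne_zero (σ, t)).hasFDerivAt.comp_hasDerivAt σ h1
      have h3 := h2.clm_apply (hasDerivAt_const σ ((0 : ℝ), (1 : ℝ)))
      simp only [map_zero, add_zero] at h3
      -- symmetry of second derivative
      have hsymm : fderiv ℝ (fderiv ℝ (fun q : ℝ × ℝ => X q.1 q.2)) (σ, t) (1, 0) (0, 1)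
          = fderiv ℝ (fderiv ℝ (fun q : ℝ × ℝ => X q.1 q.2)) (σ, t) (0, 1) (1, 0) :=
        (hX.contDiffAt.isSymmSndFDerivAt (by simp)) _ _
      -- the other mixed partial, as t-derivative of V₁
      have h4 : HasDerivAt (fun τ => fderiv ℝ (fun q : ℝ × ℝ => X q.1 q.2) (σ, τ) (1, 0))
          (fderiv ℝ (fderiv ℝ (fun q : ℝ × ℝ => X q.1 q.2)) (σ, t) (0, 1) (1, 0)) t := by
        have h5 : HasDerivAt (fun τ => ((σ, τ) : ℝ × ℝ)) (0, 1) t :=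
          (hasDerivAt_const t σ).prodMk (hasDerivAt_id t)
        have h6 : HasDerivAt (fun τ => fderiv ℝ (fun q : ℝ × ℝ => X q.1 q.2) (σ, τ))
            (fderiv ℝ (fderiv ℝ (fun q : ℝ × ℝ => X q.1 q.2)) (σ, t) (0, 1)) t :=
          (hF2.differentiable one_ne_zero (σ, t)).hasFDerivAt.comp_hasDerivAt t h5
        have h7 := h6.clm_apply (hasDerivAt_const t ((1 : ℝ), (0 : ℝ)))
        simpa using h7
      have h8 : HasDerivAt (fun τ => ((Real.cos (θ (X σ τ) τ), Real.sin (θ (X σ τ) τ)) : ℝ × ℝ))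
          (-s1 * m, c1 * m) t := by
        have := (hψ.cos).prodMk (hψ.sin)
        simpa [hc1, hs1, hφdef] using this
      have hfun2 : (fun τ => fderiv ℝ (fun q : ℝ × ℝ => X q.1 q.2) (σ, τ) (1, 0))
          = fun τ => ((Real.cos (θ (X σ τ) τ), Real.sin (θ (X σ τ) τ)) : ℝ × ℝ) :=
        funext fun τ => hfd1 σ τ
      have h9 : fderiv ℝ (fderiv ℝ (fun q : ℝ × ℝ => X q.1 q.2)) (σ, t) (0, 1) (1, 0)
          = (-s1 * m, c1 * m) := by
        rw [← h4.deriv, hfun2, h8.deriv]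
      have hfun : (fun σ' => deriv (fun τ' => X σ' τ') t)
          = fun σ' => fderiv ℝ (fun q : ℝ × ℝ => X q.1 q.2) (σ', t) (0, 1) :=
        funext fun σ' => (hXt σ' t).deriv
      rw [hfun]
      rw [hsymm, h9] at h3
      exact h3
    -- derivative of the first summand f
    have hφσ : HasDerivAt (fun σ' => θ (X σ' t) t) k σ := hφ σ
    have hA1 : HasDerivAt (fun σ' => (deriv (fun τ' => X σ' τ') t).1) (-s1 * m) σ := by
      have := (ContinuousLinearMap.fst ℝ ℝ ℝ).hasFDerivAt.comp_hasDerivAt σ hAder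
      exact this
    have hA2 : HasDerivAt (fun σ' => (deriv (fun τ' => X σ' τ') t).2) (c1 * m) σ := by
      have := (ContinuousLinearMap.snd ℝ ℝ ℝ).hasFDerivAt.comp_hasDerivAt σ hAder
      exact this
    have hsin : HasDerivAt (fun σ' => -Real.sin (θ (X σ' t) t)) (-(c1 * k)) σ := by
      have := (hφσ.sin).fun_neg
      simpa [hc1, hφdef] using this
    have hcos : HasDerivAt (fun σ' => Real.cos (θ (X σ' t) t)) (-s1 * k) σ := by
      have := hφσ.cos
      simpa [hs1, hφdef] using this
    have hf : HasDerivAt (fun σ' =>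
        (deriv (fun τ' => X σ' τ') t).1 * (-Real.sin (θ (X σ' t) t))
          + (deriv (fun τ' => X σ' τ') t).2 * Real.cos (θ (X σ' t) t))
        ((-s1 * m) * (-s1) + A.1 * (-(c1 * k)) + ((c1 * m) * c1 + A.2 * (-s1 * k))) σ := by
      have h1 := (hA1.fun_mul hsin).fun_add (hA2.fun_mul hcos)
      simpa [hA, hc1, hs1, hφdef] using h1
    -- derivative of θ_s
    have hLder : HasDerivAt (fun σ' => fderiv ℝ (fun r => θ r t) (X σ' t))
        (fderiv ℝ (fderiv ℝ (fun r => θ r t)) (X σ t) (c1, s1)) σ := by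
      have hL1 : ContDiff ℝ 1 (fderiv ℝ (fun r => θ r t)) := (hθt t).fderiv_right (by norm_num)
      have := (hL1.differentiable one_ne_zero (X σ t)).hasFDerivAt.comp_hasDerivAt σ (hXsd σ t)
      exact this
    have hV1der : HasDerivAt (fun σ' =>
        ((Real.cos (θ (X σ' t) t), Real.sin (θ (X σ' t) t)) : ℝ × ℝ))
        ((-s1 * k, c1 * k)) σ := by
      have := (hφσ.cos).prodMk (hφσ.sin)
      simpa [hc1, hs1, hφdef] using this
    have hθsder : HasDerivAt (fun σ' => deriv (fun σ'' => θ (X σ'' t) t) σ')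
        (fderiv ℝ (fderiv ℝ (fun r => θ r t)) (X σ t) (c1, s1) (c1, s1)
          + L (-s1 * k, c1 * k)) σ := by
      have h1 := hLder.clm_apply hV1der
      have hfun3 : (fun σ' => deriv (fun σ'' => θ (X σ'' t) t) σ')
          = fun σ' => fderiv ℝ (fun r => θ r t) (X σ' t)
              (Real.cos (θ (X σ' t) t), Real.sin (θ (X σ' t) t)) :=
        funext fun σ' => (hφ σ').deriv
      rw [hfun3]
      simpa [hc1, hs1, hφdef, hL] using h1
    -- Hessian = time derivative via PDE
    have hHess : fderiv ℝ (fderiv ℝ (fun r => θ r t)) (X σ t) (c1, s1) (c1, s1) = Tt := by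
      rw [hTt, hpde (X σ t) t ht]
    -- combine
    have hh : HasDerivAt h
        (((-s1 * m) * (-s1) + A.1 * (-(c1 * k)) + ((c1 * m) * c1 + A.2 * (-s1 * k)))
          - (fderiv ℝ (fderiv ℝ (fun r => θ r t)) (X σ t) (c1, s1) (c1, s1)
            + L (-s1 * k, c1 * k))) σ := hf.sub hθsder
    have hval : ((-s1 * m) * (-s1) + A.1 * (-(c1 * k)) + ((c1 * m) * c1 + A.2 * (-s1 * k)))
          - (fderiv ℝ (fderiv ℝ (fun r => θ r t)) (X σ t) (c1, s1) (c1, s1)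
            + L (-s1 * k, c1 * k)) = c σ * h σ := by
      rw [hHess]
      have htrig : s1 ^ 2 + c1 ^ 2 = 1 := by
        rw [hs1, hc1]; exact Real.sin_sq_add_cos_sq φ
      have hLA : L A = (A.1*c1 + A.2*s1) * L (c1, s1) + (-A.1*s1 + A.2*c1) * L (-s1, c1) :=
        clm_decomp L A c1 s1 htrig
      have hcσ : c σ = L (-s1, c1) := by
        simp [hcdef, hL, hc1, hs1, hφdef]
      have hLsmul : L (-s1 * k, c1 * k) = k * L (-s1, c1) := by
        have : ((-s1 * k, c1 * k) : ℝ × ℝ) = k • ((-s1, c1) : ℝ × ℝ) := by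
          simp [Prod.ext_iff]; constructor <;> ring
        rw [this, map_smul, smul_eq_mul]
      have hhσ : h σ = (A.1 * (-s1) + A.2 * c1) - k := by
        simp only [hhdef]
        rw [← hA, (hφ σ).deriv]
        try simp [hk, hL, hc1, hs1, hφdef]
      rw [hhσ, hcσ, hLsmul, hk, hm, hLA]
      try linear_combination (((A.1*c1 + A.2*s1) * L (c1, s1)
        + (-A.1*s1 + A.2*c1) * L (-s1, c1)) + Tt) * htrig
    rw [hval] at hh
    exact hh
  -- conclude via the ODE lemma
  have := linear_ode_zero h c hccont key hzero
  have hs0 := this s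
  simp only [hhdef] at hs0
  linarith [hs0]
end

section
/- Suppose θ : ℝ² → ℝ is C² and satisfies Hess θ(V₁,V₁) = 0 with V₁ = (cos θ, sin θ). Along any integral curve α of V₁ (α' = V₁ ∘ α), the function f(s) = θ(α(s)) satisfies the second order ODE f''(s) = g(s)·f'(s), where g(s) = (∇_{V₂}θ)(α(s)) and V₂ = (−sin θ, cos θ). Consequently f' has constant sign: either f' ≡ 0, f' > 0 everywhere, or f' < 0 everywhere on the interval of definition. -/
open Set

/-- If `θ` is C² and satisfies `Hess θ(V₁,V₁) = 0` with `V₁ = (cos θ, sin θ)`,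
then along any integral curve `α` of `V₁` the function `f = θ ∘ α` satisfies
`f'' = g · f'` with `g = (∇_{V₂}θ) ∘ α`, `V₂ = (−sin θ, cos θ)`; consequently
`f'` has constant sign: `f' ≡ 0`, `f' > 0` everywhere, or `f' < 0` everywhere. -/
theorem angle_derivative_constant_sign (θ : ℝ × ℝ → ℝ) (hθ : ContDiff ℝ 2 θ)
    (hpde : ∀ p : ℝ × ℝ,
      fderiv ℝ (fderiv ℝ θ) p (Real.cos (θ p), Real.sin (θ p))
        (Real.cos (θ p), Real.sin (θ p)) = 0)
    (a b : ℝ) (α : ℝ → ℝ × ℝ)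
    (hα : ∀ s ∈ Set.Ioo a b,
      HasDerivAt α (Real.cos (θ (α s)), Real.sin (θ (α s))) s) :
    (∀ s ∈ Set.Ioo a b,
      HasDerivAt (fun u => deriv (fun v => θ (α v)) u)
        (fderiv ℝ θ (α s) (-Real.sin (θ (α s)), Real.cos (θ (α s)))
          * deriv (fun v => θ (α v)) s) s)
    ∧ ((∀ s ∈ Set.Ioo a b, deriv (fun v => θ (α v)) s = 0)
      ∨ (∀ s ∈ Set.Ioo a b, 0 < deriv (fun v => θ (α v)) s)
      ∨ (∀ s ∈ Set.Ioo a b, deriv (fun v => θ (α v)) s < 0)) := by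
  have hθd : Differentiable ℝ θ := hθ.differentiable (by norm_num)
  have hθ1 : ContDiff ℝ 1 (fderiv ℝ θ) := hθ.fderiv_right (by norm_num)
  set f : ℝ → ℝ := fun v => θ (α v) with hfdef
  -- first derivative of f along the curve
  have hfd : ∀ s ∈ Set.Ioo a b, HasDerivAt f
      (fderiv ℝ θ (α s) (Real.cos (θ (α s)), Real.sin (θ (α s)))) s := by
    intro s hs
    exact (hθd (α s)).hasFDerivAt.comp_hasDerivAt s (hα s hs)
  have hderivf : ∀ s ∈ Set.Ioo a b, deriv f s
      = fderiv ℝ θ (α s) (Real.cos (θ (α s)), Real.sin (θ (α s))) :=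
    fun s hs => (hfd s hs).deriv
  -- the second-order ODE (part 1)
  have part1 : ∀ s ∈ Set.Ioo a b,
      HasDerivAt (fun u => deriv f u)
        (fderiv ℝ θ (α s) (-Real.sin (θ (α s)), Real.cos (θ (α s))) * deriv f s) s := by
    intro s hs
    set D : ℝ := fderiv ℝ θ (α s) (Real.cos (θ (α s)), Real.sin (θ (α s))) with hD
    have hfs : HasDerivAt f D s := hfd s hs
    have hA : HasDerivAt (fun u => fderiv ℝ θ (α u))
        (fderiv ℝ (fderiv ℝ θ) (α s) (Real.cos (θ (α s)), Real.sin (θ (α s)))) s :=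
      ((hθ1.differentiable (by norm_num)) (α s)).hasFDerivAt.comp_hasDerivAt s (hα s hs)
    have hcos : HasDerivAt (fun u => Real.cos (f u)) (-Real.sin (f s) * D) s := hfs.cos
    have hsin : HasDerivAt (fun u => Real.sin (f u)) (Real.cos (f s) * D) s := hfs.sin
    have hV : HasDerivAt (fun u => (Real.cos (f u), Real.sin (f u)))
        (-Real.sin (f s) * D, Real.cos (f s) * D) s := hcos.prodMk hsin
    have hAV := hA.clm_apply hV
    have hval : fderiv ℝ (fderiv ℝ θ) (α s) (Real.cos (θ (α s)), Real.sin (θ (α s)))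
          ((Real.cos (f s), Real.sin (f s)))
        + fderiv ℝ θ (α s) (-Real.sin (f s) * D, Real.cos (f s) * D)
        = fderiv ℝ θ (α s) (-Real.sin (θ (α s)), Real.cos (θ (α s))) * D := by
      have h0 : fderiv ℝ (fderiv ℝ θ) (α s) (Real.cos (θ (α s)), Real.sin (θ (α s)))
          ((Real.cos (f s), Real.sin (f s))) = 0 := hpde (α s)
      have h1 : (-Real.sin (f s) * D, Real.cos (f s) * D)
          = D • (-Real.sin (θ (α s)), Real.cos (θ (α s))) := by
        simp [hfdef, Prod.ext_iff, smul_eq_mul]; constructor <;> ring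
      rw [h0, h1, map_smul, smul_eq_mul, zero_add, mul_comm]
    have hF : HasDerivAt (fun u => fderiv ℝ θ (α u) (Real.cos (f u), Real.sin (f u)))
        (fderiv ℝ θ (α s) (-Real.sin (θ (α s)), Real.cos (θ (α s))) * D) s := by
      rw [← hval]; exact hAV
    have heq : (fun u => deriv f u)
        =ᶠ[nhds s] fun u => fderiv ℝ θ (α u) (Real.cos (f u), Real.sin (f u)) := by
      filter_upwards [Ioo_mem_nhds hs.1 hs.2] with u hu
      exact hderivf u hu
    have := hF.congr_of_eventuallyEq heq
    rwa [hderivf s hs, ← hD]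
  refine ⟨part1, ?_⟩
  -- part 2: constant sign
  rcases le_or_gt b a with hba | hab
  · left; intro s hs; exact absurd hs (by simp [Set.Ioo_eq_empty (not_lt.mpr hba)])
  set s₀ : ℝ := (a + b) / 2 with hs₀def
  have hs₀ : s₀ ∈ Set.Ioo a b := ⟨by linarith, by linarith⟩
  set g : ℝ → ℝ := fun u => fderiv ℝ θ (α u) (-Real.sin (θ (α u)), Real.cos (θ (α u))) with hgdef
  -- continuity of g on Ioo
  have hαc : ContinuousOn α (Set.Ioo a b) :=
    fun u hu => (hα u hu).continuousAt.continuousWithinAt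
  have hfc : ContinuousOn (fun u => θ (α u)) (Set.Ioo a b) :=
    hθ.continuous.comp_continuousOn hαc
  have hgc : ContinuousOn g (Set.Ioo a b) := by
    apply ContinuousOn.clm_apply (hθ1.continuous.comp_continuousOn hαc)
    exact ((Real.continuous_sin.comp_continuousOn hfc).neg).prodMk
      (Real.continuous_cos.comp_continuousOn hfc)
  -- antiderivative of g
  set G : ℝ → ℝ := fun u => ∫ t in s₀..u, g t with hGdef
  have hG : ∀ u ∈ Set.Ioo a b, HasDerivAt G (g u) u := by
    intro u hu
    have hsub : Set.uIcc s₀ u ⊆ Set.Ioo a b := Set.ordConnected_Ioo.uIcc_subset hs₀ hu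
    have hint : IntervalIntegrable g MeasureTheory.volume s₀ u :=
      (hgc.mono hsub).intervalIntegrable
    exact intervalIntegral.integral_hasDerivAt_right hint
      (hgc.stronglyMeasurableAtFilter isOpen_Ioo u hu)
      (hgc.continuousAt (Ioo_mem_nhds hu.1 hu.2))
  -- h = f' · exp(−G) has zero derivative
  set h : ℝ → ℝ := fun u => deriv f u * Real.exp (-(G u)) with hhdef
  have hzero : ∀ u ∈ Set.Ioo a b, HasDerivAt h 0 u := by
    intro u hu
    have h1 := part1 u hu
    have h2 : HasDerivAt (fun u => Real.exp (-(G u)))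
        (Real.exp (-(G u)) * (-(g u))) u := ((hG u hu).neg).exp
    have : HasDerivAt (fun u => deriv f u * Real.exp (-(G u))) _ u := h1.mul h2
    convert this using 1
    simp only [hgdef]
    ring
  have hconst : ∀ u ∈ Set.Ioo a b, h u = h s₀ := by
    intro u hu
    have key : ∀ x y : ℝ, x ≤ y → x ∈ Set.Ioo a b → y ∈ Set.Ioo a b → h y = h x := by
      intro x y hxy hx hy
      have hsub : Set.Icc x y ⊆ Set.Ioo a b := by
        intro z hz; exact ⟨lt_of_lt_of_le hx.1 hz.1, lt_of_le_of_lt hz.2 hy.2⟩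
      have hcont : ContinuousOn h (Set.Icc x y) :=
        fun z hz => (hzero z (hsub hz)).continuousAt.continuousWithinAt
      have hder : ∀ z ∈ Set.Ico x y, HasDerivWithinAt h 0 (Set.Ici z) z :=
        fun z hz => (hzero z (hsub ⟨hz.1, le_of_lt hz.2⟩)).hasDerivWithinAt
      exact constant_of_has_deriv_right_zero hcont hder y ⟨hxy, le_refl y⟩
    rcases le_total s₀ u with hle | hle
    · exact key s₀ u hle hs₀ hu
    · exact (key u s₀ hle hu hs₀).symm
  have hform : ∀ u ∈ Set.Ioo a b, deriv f u = h s₀ * Real.exp (G u) := by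
    intro u hu
    have h1 := hconst u hu
    simp only [hhdef] at h1
    have hmul : Real.exp (-(G u)) * Real.exp (G u) = 1 := by
      rw [← Real.exp_add]; simp
    calc deriv f u = deriv f u * Real.exp (-(G u)) * Real.exp (G u) := by
          rw [mul_assoc, hmul, mul_one]
      _ = h s₀ * Real.exp (G u) := by rw [h1]
  rcases lt_trichotomy (h s₀) 0 with hc | hc | hc
  · right; right; intro s hs
    rw [hform s hs]
    exact mul_neg_of_neg_of_pos hc (Real.exp_pos _)
  · left; intro s hs
    rw [hform s hs, hc, zero_mul]
  · right; left; intro s hs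
    rw [hform s hs]
    exact mul_pos hc (Real.exp_pos _)
end
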